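/- The union C of the 36 points consisting of all coordinate permutations of v = (7,7,-2,-2,-2,-2,-2,-2,-2)/√126 together with their negatives -C is a set of 72 unit vectors in the hyperplane of ℝ⁹ with coordinate sum zero; the maximal inner product between distinct points of C ∪ -C is 5/14, while every inner product between a point of C and a point of -C is at most 2/7. -/

import Mathlib

open scoped RealInnerProductSpace

/-- The vector `(7,7,-2,-2,-2,-2,-2,-2,-2)/√126` in `ℝ⁹`. -/
noncomputable def nrVec : EuclideanSpace ℝ (Fin 9) :=
  (WithLp.equiv 2 (Fin 9 → ℝ)).symm
    fun i => (if (i : ℕ) < 2 then 7 else -2) / Real.sqrt 126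

/-- The set of all coordinate permutations of `nrVec`. -/
noncomputable def nrCode : Set (EuclideanSpace ℝ (Fin 9)) :=
  {x | ∃ σ : Equiv.Perm (Fin 9),
    x = (WithLp.equiv 2 (Fin 9 → ℝ)).symm fun i => nrVec (σ i)}

noncomputable def vSet (S : Finset (Fin 9)) : EuclideanSpace ℝ (Fin 9) :=
  (WithLp.equiv 2 (Fin 9 → ℝ)).symm fun i => (if i ∈ S then 7 else -2) / Real.sqrt 126

lemma vSet_apply (S : Finset (Fin 9)) (i : Fin 9) :
    vSet S i = (if i ∈ S then 7 else -2) / Real.sqrt 126 := rfl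

lemma nrVec_apply (i : Fin 9) :
    nrVec i = (if (i : ℕ) < 2 then 7 else -2) / Real.sqrt 126 := rfl

lemma lt_two_iff (i : Fin 9) : (i : ℕ) < 2 ↔ i ∈ ({0, 1} : Finset (Fin 9)) := by
  revert i; decide

lemma mem_nrCode (x : EuclideanSpace ℝ (Fin 9)) :
    x ∈ nrCode ↔ ∃ S : Finset (Fin 9), S.card = 2 ∧ x = vSet S := by
  constructor
  · rintro ⟨σ, rfl⟩
    refine ⟨({0,1} : Finset (Fin 9)).image σ.symm, ?_, ?_⟩
    · rw [Finset.card_image_of_injective _ σ.symm.injective]; decide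
    · ext i
      change nrVec (σ i) = vSet _ i
      simp only [vSet_apply, nrVec_apply, lt_two_iff]
      congr 1
      have : σ i ∈ ({0,1} : Finset (Fin 9)) ↔ i ∈ ({0,1} : Finset (Fin 9)).image σ.symm := by
        simp only [Finset.mem_image, Finset.mem_insert, Finset.mem_singleton]
        constructor
        · intro h; exact ⟨σ i, h, σ.symm_apply_apply i⟩
        · rintro ⟨a, ha, rfl⟩; simpa using ha
      simp [this]
  · rintro ⟨S, hS, rfl⟩
    have hc : Fintype.card {i // i ∈ S} = Fintype.card {i // i ∈ ({0,1} : Finset (Fin 9))} := by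
      simp [Fintype.card_coe, hS]; decide
    let e : {i // i ∈ S} ≃ {i // i ∈ ({0,1} : Finset (Fin 9))} := Fintype.equivOfCardEq hc
    refine ⟨e.extendSubtype, ?_⟩
    ext i
    change vSet S i = nrVec (e.extendSubtype i)
    simp only [vSet_apply, nrVec_apply, lt_two_iff]
    congr 1
    by_cases h : i ∈ S
    · simp [h, e.extendSubtype_mem i h]
    · simp [h, e.extendSubtype_not_mem i h]

lemma sum_ind (S : Finset (Fin 9)) :
    ∑ i : Fin 9, (if i ∈ S then (1:ℝ) else 0) = S.card := by
  rw [Finset.sum_ite_mem, Finset.univ_inter, Finset.sum_const, nsmul_eq_mul, mul_one]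

lemma sum_prod (S T : Finset (Fin 9)) :
    ∑ i : Fin 9, (if i ∈ S then (7:ℝ) else -2) * (if i ∈ T then (7:ℝ) else -2)
      = 81 * (S ∩ T).card - 18 * S.card - 18 * T.card + 36 := by
  have h : ∀ i : Fin 9, (if i ∈ S then (7:ℝ) else -2) * (if i ∈ T then (7:ℝ) else -2)
      = 81 * (if i ∈ S ∩ T then (1:ℝ) else 0) - 18 * (if i ∈ S then (1:ℝ) else 0)
        - 18 * (if i ∈ T then (1:ℝ) else 0) + 4 := by
    intro i
    by_cases hS : i ∈ S <;> by_cases hT : i ∈ T <;>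
      simp [hS, hT, Finset.mem_inter] <;> norm_num
  simp_rw [h]
  rw [Finset.sum_add_distrib, Finset.sum_sub_distrib, Finset.sum_sub_distrib,
    ← Finset.mul_sum, ← Finset.mul_sum, ← Finset.mul_sum, sum_ind, sum_ind, sum_ind]
  simp; ring

lemma inner_vSet (S T : Finset (Fin 9)) :
    ⟪vSet S, vSet T⟫ = (81 * (S ∩ T).card - 18 * S.card - 18 * T.card + 36) / 126 := by
  have h126 : Real.sqrt 126 * Real.sqrt 126 = 126 := Real.mul_self_sqrt (by norm_num)
  rw [PiLp.inner_apply]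
  simp only [RCLike.inner_apply, conj_trivial, vSet_apply]
  rw [← sum_prod S T, Finset.sum_div]
  refine Finset.sum_congr rfl fun i _ => ?_
  rw [div_mul_div_comm, h126]; ring

lemma inner_vSet2 {S T : Finset (Fin 9)} (hS : S.card = 2) (hT : T.card = 2) :
    ⟪vSet S, vSet T⟫ = (81 * (S ∩ T).card - 36) / 126 := by
  rw [inner_vSet, hS, hT]; norm_num

lemma inner_self_vSet {S : Finset (Fin 9)} (hS : S.card = 2) :
    ⟪vSet S, vSet S⟫ = 1 := by
  rw [inner_vSet2 hS hS, Finset.inter_self, hS]; norm_num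

lemma norm_vSet {S : Finset (Fin 9)} (hS : S.card = 2) : ‖vSet S‖ = 1 := by
  have h := real_inner_self_eq_norm_mul_norm (vSet S)
  rw [inner_self_vSet hS] at h
  rcases mul_self_eq_one_iff.mp h.symm with h1 | h1
  · exact h1
  · have := norm_nonneg (vSet S); linarith

lemma sum_vSet {S : Finset (Fin 9)} (hS : S.card = 2) : ∑ i, vSet S i = 0 := by
  simp only [vSet_apply]
  rw [← Finset.sum_div]
  have h : ∀ i : Fin 9, (if i ∈ S then (7:ℝ) else -2)
      = 9 * (if i ∈ S then (1:ℝ) else 0) - 2 := by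
    intro i; by_cases hi : i ∈ S <;> simp [hi] <;> norm_num
  simp_rw [h]
  rw [Finset.sum_sub_distrib, ← Finset.mul_sum, sum_ind, hS, Finset.sum_const]
  simp

lemma inter_card_eq {S T : Finset (Fin 9)} (hS : S.card = 2) (hT : T.card = 2)
    (h : 2 ≤ (S ∩ T).card) : S = T := by
  have h1 : S ∩ T = S :=
    Finset.eq_of_subset_of_card_le Finset.inter_subset_left (by omega)
  have h2 : S ∩ T = T :=
    Finset.eq_of_subset_of_card_le Finset.inter_subset_right (by omega)
  rw [← h1, h2]

lemma key1 {S T : Finset (Fin 9)} (hS : S.card = 2) (hT : T.card = 2) (hne : S ≠ T) :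
    ⟪vSet S, vSet T⟫ ≤ 5 / 14 := by
  have hk : (S ∩ T).card ≤ 1 := by
    by_contra h
    exact hne (inter_card_eq hS hT (by omega))
  have hk' : ((S ∩ T).card : ℝ) ≤ 1 := by exact_mod_cast hk
  rw [inner_vSet2 hS hT]
  rw [div_le_iff₀ (by norm_num : (0:ℝ) < 126)]
  linarith

lemma key2 {S T : Finset (Fin 9)} (hS : S.card = 2) (hT : T.card = 2) :
    ⟪vSet S, -vSet T⟫ ≤ 2 / 7 := by
  have hk : (0:ℝ) ≤ ((S ∩ T).card : ℝ) := Nat.cast_nonneg _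
  rw [inner_neg_right, inner_vSet2 hS hT, neg_div']
  rw [div_le_iff₀ (by norm_num : (0:ℝ) < 126)]
  linarith

lemma not_neg {S T : Finset (Fin 9)} (hS : S.card = 2) (hT : T.card = 2) :
    vSet S ≠ -vSet T := by
  intro h
  have h1 : ⟪vSet S, -vSet T⟫ ≤ 2 / 7 := key2 hS hT
  rw [← h, inner_self_vSet hS] at h1; norm_num at h1

lemma vSet_injOn {S T : Finset (Fin 9)} (hS : S.card = 2) (hT : T.card = 2)
    (h : vSet S = vSet T) : S = T := by
  have h1 : ⟪vSet S, vSet T⟫ = 1 := by rw [← h, inner_self_vSet hS]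
  rw [inner_vSet2 hS hT] at h1
  have hk : ((S ∩ T).card : ℝ) = 2 := by
    field_simp at h1; linarith
  exact inter_card_eq hS hT (by exact_mod_cast hk.ge)

lemma nrCode_eq : nrCode = vSet '' {S : Finset (Fin 9) | S.card = 2} := by
  ext x
  rw [mem_nrCode]
  constructor
  · rintro ⟨S, hS, rfl⟩; exact ⟨S, hS, rfl⟩
  · rintro ⟨S, hS, rfl⟩; exact ⟨S, hS, rfl⟩

lemma nrCode_finite : nrCode.Finite := by
  rw [nrCode_eq]; exact (Set.toFinite _).image _

lemma nrCode_ncard : nrCode.ncard = 36 := by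
  have hinj : Set.InjOn vSet {S : Finset (Fin 9) | S.card = 2} :=
    fun S hS T hT h => vSet_injOn hS hT h
  rw [nrCode_eq, Set.ncard_image_of_injOn hinj]
  have : {S : Finset (Fin 9) | S.card = 2}
      = ↑((Finset.univ : Finset (Fin 9)).powersetCard 2) := by
    ext S; simp [Finset.mem_powersetCard_univ]
  rw [this, Set.ncard_coe_finset, Finset.card_powersetCard]
  simp [Nat.choose]

lemma mem_union_iff (x : EuclideanSpace ℝ (Fin 9)) :
    x ∈ nrCode ∪ (Neg.neg '' nrCode) ↔
      ∃ S : Finset (Fin 9), S.card = 2 ∧ (x = vSet S ∨ x = -vSet S) := by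
  constructor
  · rintro (hx | ⟨y, hy, rfl⟩)
    · obtain ⟨S, hS, rfl⟩ := (mem_nrCode _).mp hx
      exact ⟨S, hS, Or.inl rfl⟩
    · obtain ⟨S, hS, rfl⟩ := (mem_nrCode _).mp hy
      exact ⟨S, hS, Or.inr rfl⟩
  · rintro ⟨S, hS, (rfl | rfl)⟩
    · exact Or.inl ((mem_nrCode _).mpr ⟨S, hS, rfl⟩)
    · exact Or.inr ⟨vSet S, (mem_nrCode _).mpr ⟨S, hS, rfl⟩, rfl⟩

/-- The union of the 36 coordinate permutations of `(7,7,-2,…,-2)/√126` with their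
negatives is a set of 72 unit vectors in the hyperplane of `ℝ⁹` with coordinate sum zero;
the maximal inner product between distinct points of `C ∪ -C` is `5/14`, while every
inner product between a point of `C` and a point of `-C` is at most `2/7`. -/
theorem stmt13 :
    nrCode.ncard = 36 ∧
    (nrCode ∪ (Neg.neg '' nrCode)).ncard = 72 ∧
    (∀ x ∈ nrCode ∪ (Neg.neg '' nrCode), ‖x‖ = 1 ∧ ∑ i, x i = 0) ∧
    (∀ x ∈ nrCode ∪ (Neg.neg '' nrCode), ∀ y ∈ nrCode ∪ (Neg.neg '' nrCode),
      x ≠ y → ⟪x, y⟫ ≤ 5 / 14) ∧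
    (∃ x ∈ nrCode ∪ (Neg.neg '' nrCode), ∃ y ∈ nrCode ∪ (Neg.neg '' nrCode),
      x ≠ y ∧ ⟪x, y⟫ = 5 / 14) ∧
    ∀ x ∈ nrCode, ∀ y ∈ Neg.neg '' nrCode, ⟪x, y⟫ ≤ 2 / 7 := by
  have hdisj : Disjoint nrCode (Neg.neg '' nrCode) := by
    rw [Set.disjoint_left]
    rintro x hx ⟨y, hy, rfl⟩
    obtain ⟨S, hS, hxS⟩ := (mem_nrCode _).mp hx
    obtain ⟨T, hT, rfl⟩ := (mem_nrCode _).mp hy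
    exact not_neg hS hT (hxS ▸ rfl)
  refine ⟨nrCode_ncard, ?_, ?_, ?_, ?_, ?_⟩
  · rw [Set.ncard_union_eq hdisj nrCode_finite (nrCode_finite.image _),
      Set.ncard_image_of_injective _ neg_injective, nrCode_ncard]
  · intro x hx
    obtain ⟨S, hS, (rfl | rfl)⟩ := (mem_union_iff x).mp hx
    · exact ⟨norm_vSet hS, sum_vSet hS⟩
    · constructor
      · rw [norm_neg]; exact norm_vSet hS
      · have := sum_vSet hS
        simp only [PiLp.neg_apply]
        rw [Finset.sum_neg_distrib, this, neg_zero]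
  · intro x hx y hy hne
    obtain ⟨S, hS, (rfl | rfl)⟩ := (mem_union_iff x).mp hx <;>
      obtain ⟨T, hT, (rfl | rfl)⟩ := (mem_union_iff y).mp hy
    · exact key1 hS hT (fun h => hne (by rw [h]))
    · exact le_trans (key2 hS hT) (by norm_num)
    · rw [inner_neg_left, ← inner_neg_right]
      exact le_trans (key2 hS hT) (by norm_num)
    · rw [inner_neg_neg]
      exact key1 hS hT (fun h => hne (by rw [h]))
  · refine ⟨vSet {0,1}, (mem_union_iff _).mpr ⟨{0,1}, by decide, Or.inl rfl⟩,
      vSet {1,2}, (mem_union_iff _).mpr ⟨{1,2}, by decide, Or.inl rfl⟩, ?_, ?_⟩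
    · intro h
      have h0 : vSet {0,1} (0 : Fin 9) = vSet {1,2} (0 : Fin 9) := by rw [h]
      rw [vSet_apply, vSet_apply] at h0
      have hm1 : (0 : Fin 9) ∈ ({0,1} : Finset (Fin 9)) := by decide
      have hm2 : (0 : Fin 9) ∉ ({1,2} : Finset (Fin 9)) := by decide
      rw [if_pos hm1, if_neg hm2] at h0
      have h126 : Real.sqrt 126 ≠ 0 := by positivity
      field_simp at h0
      norm_num at h0
    · have hI : (({0,1} : Finset (Fin 9)) ∩ {1,2}).card = 1 := by decide
      rw [inner_vSet2 (by decide) (by decide), hI]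
      norm_num
  · rintro x hx y ⟨b, hb, rfl⟩
    obtain ⟨S, hS, rfl⟩ := (mem_nrCode _).mp hx
    obtain ⟨T, hT, rfl⟩ := (mem_nrCode _).mp hb
    exact key2 hS hT
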